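/- arXiv:1708.04046 — 2 statements merged into one kernel-verified Lean document; each statement's English description precedes it below -/
import Mathlib

section
/- Let C₁, C₂, C₁', C₂' be pretriangulated categories and let i₁ : C₁' ⥤ C₁, i₂ : C₂' ⥤ C₂, G : C₂ ⥤ C₁, G' : C₂' ⥤ C₁', F : C₁ ⥤ C₂, F' : C₁' ⥤ C₂' be triangulated (exact) functors, together with natural isomorphisms G ∘ i₂ ≅ i₁ ∘ G' and F ∘ i₁ ≅ i₂ ∘ F', and adjunctions F ⊣ G and F' ⊣ G'. Assume that F and F' are fully faithful. Let c₁ be an object of C₁ such that the pointwise left adjoint of i₂ is defined at F(c₁), with value c₂' ∈ C₂'. Then: (1) the counit morphism F'(G'(c₂')) → c₂' is an isomorphism; (2) the pointwise left adjoint of i₁ is defined at c₁, with value G'(c₂'); in particular F' applied to this value is isomorphic to c₂' = (i₂)^L(F(c₁)). -/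
open CategoryTheory Opposite Limits Pretriangulated

/-- the unnumbered Proposition of Section 1.2 of the paper, in the
pretriangulated setting.
Given a commuting square of triangulated functors between pretriangulated categories,
with `F ⊣ G`, `F' ⊣ G'`, `F` and `F'` fully faithful, and an object `c₁ : C₁` at which
the pointwise left adjoint of `i₂` is defined at `F c₁` with value `c₂'`, then:
(1) the counit `F'(G'(c₂')) → c₂'` is an isomorphism;
(2) the pointwise left adjoint of `i₁` is defined at `c₁` with value `G'(c₂')`;
in particular `F'` applied to this value is isomorphic to `c₂'`. -/
theorem pointwise_left_adjoint_descends
    {C₁ C₂ C₁' C₂' : Type u}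
    [Category.{v} C₁] [Category.{v} C₂] [Category.{v} C₁'] [Category.{v} C₂']
    [HasZeroObject C₁] [HasZeroObject C₂] [HasZeroObject C₁'] [HasZeroObject C₂']
    [Preadditive C₁] [Preadditive C₂] [Preadditive C₁'] [Preadditive C₂']
    [HasShift C₁ ℤ] [HasShift C₂ ℤ] [HasShift C₁' ℤ] [HasShift C₂' ℤ]
    [∀ n : ℤ, (shiftFunctor C₁ n).Additive] [∀ n : ℤ, (shiftFunctor C₂ n).Additive]
    [∀ n : ℤ, (shiftFunctor C₁' n).Additive] [∀ n : ℤ, (shiftFunctor C₂' n).Additive]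
    [Pretriangulated C₁] [Pretriangulated C₂] [Pretriangulated C₁'] [Pretriangulated C₂']
    (i₁ : C₁' ⥤ C₁) (i₂ : C₂' ⥤ C₂) (G : C₂ ⥤ C₁) (G' : C₂' ⥤ C₁')
    (F : C₁ ⥤ C₂) (F' : C₁' ⥤ C₂')
    [i₁.CommShift ℤ] [i₂.CommShift ℤ] [G.CommShift ℤ] [G'.CommShift ℤ]
    [F.CommShift ℤ] [F'.CommShift ℤ]
    [i₁.IsTriangulated] [i₂.IsTriangulated] [G.IsTriangulated] [G'.IsTriangulated]
    [F.IsTriangulated] [F'.IsTriangulated]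
    (sqG : i₂ ⋙ G ≅ G' ⋙ i₁) (sqF : i₁ ⋙ F ≅ F' ⋙ i₂)
    (adj : F ⊣ G) (adj' : F' ⊣ G')
    [F.Full] [F.Faithful] [F'.Full] [F'.Faithful]
    (c₁ : C₁) (c₂' : C₂')
    (hdef : coyoneda.obj (op c₂') ≅ i₂ ⋙ coyoneda.obj (op (F.obj c₁))) :
    IsIso (adj'.counit.app c₂') ∧
      Nonempty (coyoneda.obj (op (G'.obj c₂')) ≅ i₁ ⋙ coyoneda.obj (op c₁)) ∧
      Nonempty (F'.obj (G'.obj c₂') ≅ c₂') := by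
  -- `G'` applied to the counit is an isomorphism, since the unit is an isomorphism
  -- (`F'` being fully faithful).
  haveI : IsIso (adj'.unit.app (G'.obj c₂') ≫ G'.map (adj'.counit.app c₂')) := by
    rw [adj'.right_triangle_components]
    exact ⟨𝟙 _, by simp, by simp⟩
  haveI hG'ε : IsIso (G'.map (adj'.counit.app c₂')) :=
    IsIso.of_isIso_comp_left (adj'.unit.app (G'.obj c₂')) (G'.map (adj'.counit.app c₂'))
  -- Complete the counit to a distinguished triangle with cone `z`.
  obtain ⟨z, g, h, hT⟩ :=
    Pretriangulated.distinguished_cocone_triangle (adj'.counit.app c₂')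
  set T : Triangle C₂' := Triangle.mk (adj'.counit.app c₂') g h with hTdef
  -- Applying the triangulated functor `G'` shows that `G' z ≅ 0`.
  have hTz := G'.map_distinguished T hT
  have hzG' : IsZero (G'.obj z) := by
    have := Triangle.isZero₃_of_isIso₁ _ hTz hG'ε
    exact this
  -- Via the commuting square `sqG`, `G (i₂ z) ≅ 0`.
  have hzi : IsZero (G.obj (i₂.obj z)) := by
    have h1 : IsZero (i₁.obj (G'.obj z)) := by
      rw [IsZero.iff_id_eq_zero] at hzG' ⊢
      rw [← i₁.map_id, hzG', i₁.map_zero]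
    exact h1.of_iso (sqG.app z)
  -- Hence all morphisms `c₂' ⟶ z` agree (the Hom set is a singleton).
  have hsub1 : ∀ φ ψ : c₂' ⟶ z, φ = ψ := by
    intro φ ψ
    apply (Iso.toEquiv (hdef.app z)).injective
    show hdef.hom.app z φ = hdef.hom.app z ψ
    apply (adj.homEquiv c₁ (i₂.obj z)).injective
    exact hzi.eq_of_tgt _ _
  -- Similarly, all morphisms `F' X ⟶ z` agree.
  have hsub2 : ∀ (X : C₁') (φ ψ : F'.obj X ⟶ z), φ = ψ := by
    intro X φ ψ
    apply (adj'.homEquiv X z).injective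
    exact hzG'.eq_of_tgt _ _
  -- Deduce that `z ≅ 0`, hence the counit is an isomorphism.
  have hz : IsZero z := by
    rw [IsZero.iff_id_eq_zero]
    obtain ⟨ψ, hψ⟩ := Triangle.yoneda_exact₃ T hT (𝟙 z)
      (by exact hsub1 _ 0)
    have hψ0 : ψ = 0 := by
      have e := (F'.commShiftIso (1 : ℤ)).app (G'.obj c₂')
      have h0 : e.hom ≫ ψ = e.hom ≫ 0 := hsub2 _ _ _
      exact (cancel_epi e.hom).1 h0
    rw [hψ, hψ0, comp_zero]
    rfl
  haveI hiso : IsIso (adj'.counit.app c₂') :=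
    Triangle.isZero₃_iff_isIso₁ T hT |>.1 hz
  -- Part (2): the pointwise left adjoint of `i₁` is defined at `c₁` with value `G' c₂'`.
  have hF : F.FullyFaithful := Functor.FullyFaithful.ofFullyFaithful F
  have hF' : F'.FullyFaithful := Functor.FullyFaithful.ofFullyFaithful F'
  let e : ∀ y : C₁', (G'.obj c₂' ⟶ y) ≃ (c₁ ⟶ i₁.obj y) := fun y =>
    hF'.homEquiv.trans <|
      (Iso.homCongr (asIso (adj'.counit.app c₂')) (Iso.refl (F'.obj y))).trans <|
        (Iso.toEquiv (hdef.app (F'.obj y))).trans <|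
          (Iso.homCongr (Iso.refl (F.obj c₁)) ((sqF.app y).symm)).trans hF.homEquiv.symm
  have he : ∀ (y : C₁') (m : G'.obj c₂' ⟶ y),
      F.map (e y m) =
        hdef.hom.app (F'.obj y) (inv (adj'.counit.app c₂') ≫ F'.map m) ≫ sqF.inv.app y := by
    intro y m
    simp [e, Iso.homCongr, Iso.toEquiv]
  have iso2 : coyoneda.obj (op (G'.obj c₂')) ≅ i₁ ⋙ coyoneda.obj (op c₁) := by
    refine NatIso.ofComponents (fun y => Equiv.toIso (e y)) ?_
    intro y y' f
    ext m
    show e y' (m ≫ f) = e y m ≫ i₁.map f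
    apply hF.map_injective
    rw [he, F.map_comp, he]
    have h1 : inv (adj'.counit.app c₂') ≫ F'.map (m ≫ f) =
        (inv (adj'.counit.app c₂') ≫ F'.map m) ≫ F'.map f := by
      rw [F'.map_comp, Category.assoc]
    rw [h1]
    have h2 := congrArg (fun k => k (inv (adj'.counit.app c₂') ≫ F'.map m))
        (hdef.hom.naturality (F'.map f))
    replace h2 : hdef.hom.app (F'.obj y') ((inv (adj'.counit.app c₂') ≫ F'.map m) ≫ F'.map f) =
        hdef.hom.app (F'.obj y) (inv (adj'.counit.app c₂') ≫ F'.map m) ≫ i₂.map (F'.map f) := h2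
    rw [h2]
    have h3 := sqF.inv.naturality f
    simp only [Functor.comp_obj, Functor.comp_map] at h3
    rw [Category.assoc, h3, ← Category.assoc]
  exact ⟨hiso, ⟨iso2⟩, ⟨asIso (adj'.counit.app c₂')⟩⟩
end

section
/- Let D and E be pretriangulated categories, let F' : D ⥤ E and G' : E ⥤ D be triangulated (exact) functors with an adjunction F' ⊣ G', and assume that F' is fully faithful. Let z be an object of E and let c̃ be a cone of the counit morphism ε_z : F'(G'(z)) → z, i.e. an object fitting into a distinguished triangle F'(G'(z)) → z → c̃ → F'(G'(z))[1]. Then: (1) G'(c̃) is a zero object of D; (2) if moreover the abelian group Hom_E(z, c̃) is zero, then c̃ is a zero object of E and the counit ε_z : F'(G'(z)) → z is an isomorphism. -/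
open CategoryTheory Opposite Limits Pretriangulated

/-- key mechanism in the proof of the unnumbered Proposition of
Section 1.2 of the paper.
Let `F' : D ⥤ E` and `G' : E ⥤ D` be triangulated functors between pretriangulated
categories with an adjunction `F' ⊣ G'`, and suppose `F'` is fully faithful. Let
`ctilde` be a cone of the counit `ε_z : F'(G'(z)) → z`. Then `G'(ctilde)` is a zero object,
and if moreover every morphism `z ⟶ ctilde` is zero, then `ctilde` is a zero object and
the counit `ε_z` is an isomorphism. -/
theorem cone_of_counit_vanishes
    {D E : Type u} [Category.{v} D] [Category.{v} E]
    [HasZeroObject D] [HasZeroObject E]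
    [Preadditive D] [Preadditive E]
    [HasShift D ℤ] [HasShift E ℤ]
    [∀ n : ℤ, (shiftFunctor D n).Additive] [∀ n : ℤ, (shiftFunctor E n).Additive]
    [Pretriangulated D] [Pretriangulated E]
    (F' : D ⥤ E) (G' : E ⥤ D)
    [F'.CommShift ℤ] [G'.CommShift ℤ]
    [F'.IsTriangulated] [G'.IsTriangulated]
    (adj : F' ⊣ G')
    [F'.Full] [F'.Faithful]
    (z : E) (ctilde : E)
    (g : z ⟶ ctilde) (h : ctilde ⟶ (F'.obj (G'.obj z))⟦(1 : ℤ)⟧)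
    (hT : Triangle.mk (adj.counit.app z) g h ∈ distTriang E) :
    IsZero (G'.obj ctilde) ∧
      ((∀ f : z ⟶ ctilde, f = 0) → (IsZero ctilde ∧ IsIso (adj.counit.app z))) := by
  -- `G'` of the triangle is distinguished
  have hT' := G'.map_distinguished _ hT
  -- `G'(ε_z)` is an isomorphism since the unit is an isomorphism (F' fully faithful)
  have hiso : IsIso (G'.map (adj.counit.app z)) := by
    have h2 : IsIso (adj.unit.app (G'.obj z) ≫ G'.map (adj.counit.app z)) := by
      rw [adj.right_triangle_components z]; exact IsIso.id _
    exact IsIso.of_isIso_comp_left (adj.unit.app (G'.obj z)) _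
  have h1 : IsZero (G'.obj ctilde) :=
    Triangle.isZero₃_of_isIso₁ _ hT' hiso
  refine ⟨h1, fun hf => ?_⟩
  -- g = 0, so the identity of ctilde factors through h
  obtain ⟨r, hr⟩ : ∃ r : (F'.obj (G'.obj z))⟦(1 : ℤ)⟧ ⟶ ctilde, 𝟙 ctilde = h ≫ r :=
    Triangle.yoneda_exact₃ _ hT (𝟙 ctilde) (by
    exact (Category.comp_id g).trans (hf g))
  -- r : (F'(G'z))⟦1⟧ ⟶ ctilde is zero by adjunction and h1
  have hr0 : r = 0 := by
    have e := (F'.commShiftIso (1 : ℤ)).app (G'.obj z)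
    have key : e.hom ≫ r = 0 := by
      have := (adj.homEquiv _ _).symm_apply_apply (e.hom ≫ r)
      rw [← this]
      have : adj.homEquiv _ ctilde (e.hom ≫ r) = 0 := h1.eq_of_tgt _ _
      rw [this, Adjunction.homEquiv_counit, Functor.map_zero, zero_comp]
    calc r = e.inv ≫ (e.hom ≫ r) := by simp
      _ = 0 := by rw [key, comp_zero]
  have hz : IsZero ctilde := by
    rw [IsZero.iff_id_eq_zero]
    rw [hr] at *
    simp [hr0]
  exact ⟨hz, (Triangle.isZero₃_iff_isIso₁ _ hT).1 hz⟩
end
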